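/- If n ≥ 3, then the transition matrix P_KTV of the KTV-switch chain on Ω = Ω(r,c,F) is positive semidefinite, i.e., all eigenvalues of P_KTV are non-negative. In particular the KTV-switch chain does not need to be made lazy. -/

import Mathlib

open Finset

attribute [local instance] Classical.propDecidable

/-- A binary `m × n` matrix, with `true` representing a `1` entry. -/
abbrev BinMat (m n : ℕ) := Fin m → Fin n → Bool

/-- `A ∈ Ω(r,c,F)`: the binary matrix `A` has row sums `r`, column sums `c`, and is zero
on the forbidden entries `F`. -/
def inOmega {m n : ℕ} (r : Fin m → ℕ) (c : Fin n → ℕ) (F : Finset (Fin m × Fin n))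
    (A : BinMat m n) : Prop :=
  (∀ i : Fin m, (univ.filter fun k => A i k = true).card = r i) ∧
  (∀ k : Fin n, (univ.filter fun i => A i k = true).card = c k) ∧
  ∀ p ∈ F, A p.1 p.2 = false

/-- `U_ij(A)`: columns with a `1` in row `i`, a `0` in row `j`, and `(j,k)` not forbidden. -/
def Uset {m n : ℕ} (F : Finset (Fin m × Fin n)) (i j : Fin m) (A : BinMat m n) :
    Finset (Fin n) :=
  univ.filter fun k => A i k = true ∧ A j k = false ∧ (j, k) ∉ F

/-- `L_ij(A)`: columns with a `0` in row `i`, a `1` in row `j`, and `(i,k)` not forbidden. -/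
def Lset {m n : ℕ} (F : Finset (Fin m × Fin n)) (i j : Fin m) (A : BinMat m n) :
    Finset (Fin n) :=
  univ.filter fun k => A i k = false ∧ A j k = true ∧ (i, k) ∉ F

/-- `u_ij(A) = |U_ij(A)|`. -/
def usize {m n : ℕ} (F : Finset (Fin m × Fin n)) (i j : Fin m) (A : BinMat m n) : ℕ :=
  (Uset F i j A).card

/-- `l_ij(A) = |L_ij(A)|`. -/
def lsize {m n : ℕ} (F : Finset (Fin m × Fin n)) (i j : Fin m) (A : BinMat m n) : ℕ :=
  (Lset F i j A).card

/-- `B ∈ N_ij(A)`: `B ∈ Ω` and `B` agrees with `A` outside `{i,j} × (U_ij(A) ∪ L_ij(A))`. -/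
def inNbhd {m n : ℕ} (r : Fin m → ℕ) (c : Fin n → ℕ) (F : Finset (Fin m × Fin n))
    (i j : Fin m) (A B : BinMat m n) : Prop :=
  inOmega r c F B ∧
  ∀ k l, (k, l) ∉ (({i, j} : Finset (Fin m)) ×ˢ (Uset F i j A ∪ Lset F i j A)) →
    B k l = A k l

/-- `A` and `B` are switch-adjacent for rows `i, j`: `A - B` has exactly four nonzero
entries, all in rows `i` and `j`, and the columns containing them have no forbidden
entries in rows `i` and `j`. -/
def switchAdjIJ {m n : ℕ} (F : Finset (Fin m × Fin n)) (i j : Fin m)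
    (A B : BinMat m n) : Prop :=
  ((univ : Finset (Fin m × Fin n)).filter fun p => A p.1 p.2 ≠ B p.1 p.2).card = 4 ∧
  (∀ p ∈ (univ : Finset (Fin m × Fin n)).filter fun p => A p.1 p.2 ≠ B p.1 p.2,
    p.1 = i ∨ p.1 = j) ∧
  ∀ p ∈ (univ : Finset (Fin m × Fin n)).filter fun p => A p.1 p.2 ≠ B p.1 p.2,
    (i, p.2) ∉ F ∧ (j, p.2) ∉ F

/-- The pairs of rows `i < j`. -/
def rowPairs (m : ℕ) : Finset (Fin m × Fin m) :=
  univ.filter fun p => p.1 < p.2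

/-- The state space `Ω(r,c,F)` as a type. -/
abbrev OmegaType {m n : ℕ} (r : Fin m → ℕ) (c : Fin n → ℕ) (F : Finset (Fin m × Fin n)) :=
  {A : BinMat m n // inOmega r c F A}

/-- Transition matrix of the KTV-switch chain on `Ω(r,c,F)` (the `γ`-switch chain with
`γ = 2/(n(n-1))`). -/
noncomputable def PKTV {m n : ℕ} (r : Fin m → ℕ) (c : Fin n → ℕ)
    (F : Finset (Fin m × Fin n)) :
    Matrix (OmegaType r c F) (OmegaType r c F) ℝ :=
  Matrix.of fun A B =>
    if A = B then
      (m.choose 2 : ℝ)⁻¹ *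
        ∑ p ∈ rowPairs m,
          (1 - (usize F p.1 p.2 A.val : ℝ) * (lsize F p.1 p.2 A.val : ℝ) *
            (2 / ((n : ℝ) * ((n : ℝ) - 1))))
    else if ∃ p ∈ rowPairs m, switchAdjIJ F p.1 p.2 A.val B.val then
      (m.choose 2 : ℝ)⁻¹ * (2 / ((n : ℝ) * ((n : ℝ) - 1)))
    else 0

lemma card_filter_eq_sum_toNat {α : Type*} [Fintype α] (P : α → Bool) :
    (univ.filter fun a => P a = true).card = ∑ a, (P a).toNat := by
  classical
  rw [Finset.card_filter]
  refine Finset.sum_congr rfl fun a _ => ?_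
  by_cases h : P a = true
  · rw [if_pos h, h]; rfl
  · rw [if_neg h]
    have : P a = false := by revert h; cases P a <;> simp
    rw [this]; rfl

lemma pair_sum {α : Type*} [Fintype α] [DecidableEq α] {P Q : α → Bool} {i j : α} (hij : i ≠ j)
    (hcard : (univ.filter fun a => P a = true).card = (univ.filter fun a => Q a = true).card)
    (hout : ∀ a, a ≠ i → a ≠ j → P a = Q a) :
    (P i).toNat + (P j).toNat = (Q i).toNat + (Q j).toNat := by
  classical
  have hsplit : ∀ R : α → Bool, ∑ a, (R a).toNat
      = (R i).toNat + ((R j).toNat + ∑ a ∈ (univ.erase i).erase j, (R a).toNat) := by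
    intro R
    rw [← Finset.add_sum_erase _ _ (Finset.mem_univ i),
      ← Finset.add_sum_erase _ _ (Finset.mem_erase.mpr ⟨Ne.symm hij, Finset.mem_univ j⟩)]
  have hrest : ∑ a ∈ (univ.erase i).erase j, (P a).toNat
      = ∑ a ∈ (univ.erase i).erase j, (Q a).toNat := by
    refine Finset.sum_congr rfl fun a ha => ?_
    simp only [Finset.mem_erase] at ha
    rw [hout a ha.2.1 ha.1]
  rw [card_filter_eq_sum_toNat, card_filter_eq_sum_toNat, hsplit P, hsplit Q, hrest] at hcard
  omega

set_option maxHeartbeats 1000000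
lemma boolmain (x1 x2 x3 x4 y1 y2 y3 y4 : Bool)
    (d1 : x1 ≠ x3) (d2 : y1 ≠ y3) (d3 : x2 ≠ x4) (d4 : y2 ≠ y4)
    (hsum : x1.toNat + y1.toNat = x3.toNat + y3.toNat)
    (hca : x1.toNat + x2.toNat = x3.toNat + x4.toNat)
    (hcb : y1.toNat + y2.toNat = y3.toNat + y4.toNat)
    (h1 : x1 = true) :
    x2 = false ∧ x3 = false ∧ x4 = true ∧ y1 = false ∧ y2 = true ∧ y3 = true ∧ y4 = false := by
  subst h1
  cases x2 <;> cases x3 <;> cases x4 <;>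
    cases y1 <;> cases y2 <;> cases y3 <;> cases y4 <;>
    simp only [Bool.toNat_true, Bool.toNat_false, ne_eq] at * <;> simp_all

lemma boolfst (x1 x3 y1 y3 : Bool) (d1 : x1 ≠ x3) (d2 : y1 ≠ y3)
    (hsum : x1.toNat + y1.toNat = x3.toNat + y3.toNat)
    (h1 : x1 = false) : y1 = true := by
  subst h1
  cases x3 <;> cases y1 <;> cases y3 <;>
    simp only [Bool.toNat_true, Bool.toNat_false, ne_eq] at * <;> simp_all

section Struct

variable {m n : ℕ} {r : Fin m → ℕ} {c : Fin n → ℕ} {F : Finset (Fin m × Fin n)}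
  {i j : Fin m} {A B : BinMat m n}

lemma not_mem_F_of_true (hA : inOmega r c F A) {a : Fin m} {b : Fin n}
    (h : A a b = true) : (a, b) ∉ F := fun hF => by
  have := hA.2.2 (a, b) hF; simp_all

lemma struct_of_adj (hij : i ≠ j) (hA : inOmega r c F A) (hB : inOmega r c F B)
    (hadj : switchAdjIJ F i j A B) :
    ∃ k k', k ≠ k' ∧ A i k = true ∧ A j k = false ∧ B i k = false ∧ B j k = true ∧
      A i k' = false ∧ A j k' = true ∧ B i k' = true ∧ B j k' = false ∧
      (j, k) ∉ F ∧ (i, k') ∉ F ∧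
      ∀ a b, ¬((a = i ∨ a = j) ∧ (b = k ∨ b = k')) → A a b = B a b := by
  classical
  obtain ⟨hcard, hrows, hforb⟩ := hadj
  have hout : ∀ a b, a ≠ i → a ≠ j → A a b = B a b := by
    intro a b hai haj
    by_contra h
    have := hrows (a, b) (by simp [h])
    simp at this; tauto
  -- column flip iff
  have hcolflip : ∀ b, (A i b ≠ B i b ↔ A j b ≠ B j b) := by
    intro b
    have hps := pair_sum (P := fun a => A a b) (Q := fun a => B a b) hij
      ((hA.2.1 b).trans (hB.2.1 b).symm) (fun a hai haj => hout a b hai haj)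
    cases h1 : A i b <;> cases h2 : B i b <;> cases h3 : A j b <;> cases h4 : B j b <;>
      simp [h1, h2, h3, h4] at hps ⊢
  set K := univ.filter fun b => A i b ≠ B i b with hKdef
  have hDK : (univ.filter fun p : Fin m × Fin n => A p.1 p.2 ≠ B p.1 p.2)
      = ({i, j} : Finset (Fin m)) ×ˢ K := by
    ext p
    simp only [Finset.mem_filter, Finset.mem_univ, true_and, Finset.mem_product,
      Finset.mem_insert, Finset.mem_singleton, hKdef]
    constructor
    · intro hp
      have hp1 := hrows p (by simp [hp])
      refine ⟨hp1, ?_⟩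
      rcases hp1 with h | h
      · rwa [h] at hp
      · rw [h] at hp; exact (hcolflip p.2).2 hp
    · rintro ⟨h1 | h1, h2⟩
      · rw [h1]; exact h2
      · rw [h1]; exact (hcolflip p.2).1 h2
  have hK2 : K.card = 2 := by
    have : (({i, j} : Finset (Fin m)) ×ˢ K).card = 2 * K.card := by
      rw [Finset.card_product, Finset.card_insert_of_notMem (by simp [hij]),
        Finset.card_singleton]
    rw [hDK, this] at hcard
    omega
  obtain ⟨k, k', hkk, hKeq⟩ := Finset.card_eq_two.mp hK2
  have hik : A i k ≠ B i k := by
    have : k ∈ K := by rw [hKeq]; simp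
    simpa [hKdef] using this
  have hik' : A i k' ≠ B i k' := by
    have : k' ∈ K := by rw [hKeq]; simp
    simpa [hKdef] using this
  have hjk : A j k ≠ B j k := (hcolflip k).1 hik
  have hjk' : A j k' ≠ B j k' := (hcolflip k').1 hik'
  have houtcol : ∀ b, b ≠ k → b ≠ k' → A i b = B i b := by
    intro b h1 h2
    by_contra h
    have : b ∈ K := by simp [hKdef, h]
    rw [hKeq] at this; simp at this; tauto
  have hrsum := pair_sum (P := A i) (Q := B i) hkk
    ((hA.1 i).trans (hB.1 i).symm) houtcol
  have hcsum : ∀ b, (A i b).toNat + (A j b).toNat = (B i b).toNat + (B j b).toNat := fun b =>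
    pair_sum (P := fun a => A a b) (Q := fun a => B a b) hij
      ((hA.2.1 b).trans (hB.2.1 b).symm) (fun a hai haj => hout a b hai haj)
  have hoff : ∀ a b, ¬((a = i ∨ a = j) ∧ (b = k ∨ b = k')) → A a b = B a b := by
    intro a b h
    push_neg at h
    by_cases ha : a = i ∨ a = j
    · have hb := h ha
      rcases ha with rfl | rfl
      · exact houtcol b hb.1 hb.2
      · by_contra hc
        have := (hcolflip b).2 hc
        exact this (houtcol b hb.1 hb.2)
    · push_neg at ha; exact hout a b ha.1 ha.2
  have hforbk : (i, k) ∉ F ∧ (j, k) ∉ F := hforb (i, k) (by simp [hik])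
  have hforbk' : (i, k') ∉ F ∧ (j, k') ∉ F := hforb (i, k') (by simp [hik'])
  cases h1 : A i k
  · have h1' : A i k' = true := boolfst _ _ _ _ hik hik' hrsum h1
    obtain ⟨q1, q2, q3, q4, q5, q6, q7⟩ :=
      boolmain _ _ _ _ _ _ _ _ hik' hik hjk' hjk (by omega) (hcsum k') (hcsum k) h1'
    exact ⟨k', k, hkk.symm, h1', q1, q2, q3, q4, q5, q6, q7, hforbk'.2, hforbk.1,
      fun a b hb => hoff a b (by tauto)⟩
  · obtain ⟨q1, q2, q3, q4, q5, q6, q7⟩ :=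
      boolmain _ _ _ _ _ _ _ _ hik hik' hjk hjk' hrsum (hcsum k) (hcsum k') h1
    exact ⟨k, k', hkk, h1, q1, q2, q3, q4, q5, q6, q7, hforbk.2, hforbk'.1, hoff⟩

end Struct

/-- The intermediate matrix obtained from `A` by moving the `1` at `(i,k)` to `(j,k)`. -/
def downM {m n : ℕ} (i j : Fin m) (A : BinMat m n) (k : Fin n) : BinMat m n :=
  fun a b => if a = i ∧ b = k then false else if a = j ∧ b = k then true else A a b

section Down

variable {m n : ℕ} {r : Fin m → ℕ} {c : Fin n → ℕ} {F : Finset (Fin m × Fin n)}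
  {i j : Fin m} {A B : BinMat m n} {k k' : Fin n}

lemma downM_col_inj (hAk : A i k = true) (hAk' : A i k' = true)
    (h : downM i j A k = downM i j A k') : k = k' := by
  by_contra hkk
  have h1 := congrFun (congrFun h i) k
  simp only [downM] at h1
  rw [if_pos (by tauto), if_neg (by tauto), if_neg (by tauto)] at h1
  exact absurd h1.symm (by simp [hAk])

lemma eq_of_downM_eq_self (hAk : k ∈ Uset F i j A) (hBk : k ∈ Uset F i j B)
    (heq : downM i j A k = downM i j B k) : A = B := by
  simp only [Uset, Finset.mem_filter] at hAk hBk
  funext a b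
  by_cases hik : a = i ∧ b = k
  · rw [hik.1, hik.2, hAk.2.1, hBk.2.1]
  · by_cases hjk : a = j ∧ b = k
    · rw [hjk.1, hjk.2, hAk.2.2.1, hBk.2.2.1]
    · have h1 := congrFun (congrFun heq a) b
      simp only [downM, if_neg hik, if_neg hjk] at h1
      exact h1

lemma downpair_vals (hij : i ≠ j) (hkk : k ≠ k')
    (hk : k ∈ Uset F i j A) (hk' : k' ∈ Uset F i j B)
    (heq : downM i j A k = downM i j B k') :
    B i k = false ∧ B j k = true ∧ A i k' = false ∧ A j k' = true ∧
      ∀ a b, ¬((a = i ∨ a = j) ∧ (b = k ∨ b = k')) → A a b = B a b := by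
  simp only [Uset, Finset.mem_filter] at hk hk'
  have hAik : A i k = true := hk.2.1
  have hAjk : A j k = false := hk.2.2.1
  have hBik' : B i k' = true := hk'.2.1
  have hBjk' : B j k' = false := hk'.2.2.1
  have hev : ∀ a b, downM i j A k a b = downM i j B k' a b :=
    fun a b => congrFun (congrFun heq a) b
  refine ⟨?_, ?_, ?_, ?_, ?_⟩
  · have := hev i k
    simp only [downM] at this
    rw [if_pos (by tauto), if_neg (by tauto), if_neg (by tauto)] at this
    exact this.symm
  · have := hev j k
    simp only [downM] at this
    rw [if_neg (by tauto), if_pos (by tauto), if_neg (by tauto), if_neg (by tauto)] at this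
    exact this.symm
  · have := hev i k'
    simp only [downM] at this
    rw [if_neg (by tauto), if_neg (by tauto), if_pos (by tauto)] at this
    exact this
  · have := hev j k'
    simp only [downM] at this
    rw [if_neg (by tauto), if_neg (by tauto), if_neg (by tauto), if_pos (by tauto)] at this
    exact this
  · intro a b hab
    have := hev a b
    simp only [downM] at this
    rw [if_neg (by tauto), if_neg (by tauto), if_neg (by tauto), if_neg (by tauto)] at this
    exact this

end Down

section DownAdj

variable {m n : ℕ} {r : Fin m → ℕ} {c : Fin n → ℕ} {F : Finset (Fin m × Fin n)}
  {i j : Fin m} {A B : BinMat m n} {k k' : Fin n}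

lemma exists_downpair (hij : i ≠ j) (hA : inOmega r c F A) (hB : inOmega r c F B)
    (hadj : switchAdjIJ F i j A B) :
    ∃ k k', k ∈ Uset F i j A ∧ k' ∈ Uset F i j B ∧ downM i j A k = downM i j B k' := by
  obtain ⟨k, k', hkk, q1, q2, q3, q4, q5, q6, q7, q8, hFjk, hFik', hoff⟩ :=
    struct_of_adj hij hA hB hadj
  refine ⟨k, k', ?_, ?_, ?_⟩
  · simp only [Uset, Finset.mem_filter]; exact ⟨Finset.mem_univ _, q1, q2, hFjk⟩
  · simp only [Uset, Finset.mem_filter]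
    exact ⟨Finset.mem_univ _, q7, q8, not_mem_F_of_true hA q6⟩
  · funext a b
    simp only [downM]
    by_cases h1 : a = i ∧ b = k
    · obtain ⟨rfl, rfl⟩ := h1
      rw [if_pos (by tauto), if_neg (by tauto), if_neg (by tauto)]
      exact q3.symm
    · rw [if_neg h1]
      by_cases h2 : a = j ∧ b = k
      · obtain ⟨rfl, rfl⟩ := h2
        rw [if_pos (by tauto), if_neg (by tauto), if_neg (by tauto)]
        exact q4.symm
      · rw [if_neg h2]
        by_cases h3 : a = i ∧ b = k'
        · obtain ⟨rfl, rfl⟩ := h3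
          rw [if_pos (by tauto)]
          exact q5
        · rw [if_neg h3]
          by_cases h4 : a = j ∧ b = k'
          · obtain ⟨rfl, rfl⟩ := h4
            rw [if_pos (by tauto)]
            exact q6
          · rw [if_neg h4]
            exact hoff a b (by tauto)

lemma adj_of_downpair (hij : i ≠ j) (hA : inOmega r c F A) (hB : inOmega r c F B)
    (hAB : A ≠ B) (hk : k ∈ Uset F i j A) (hk' : k' ∈ Uset F i j B)
    (heq : downM i j A k = downM i j B k') : switchAdjIJ F i j A B := by
  have hkk : k ≠ k' := by
    rintro rfl
    exact hAB (eq_of_downM_eq_self hk hk' heq)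
  obtain ⟨v1, v2, v3, v4, hoff⟩ := downpair_vals hij hkk hk hk' heq
  simp only [Uset, Finset.mem_filter] at hk hk'
  have hDset : (univ.filter fun p : Fin m × Fin n => A p.1 p.2 ≠ B p.1 p.2)
      = {(i, k), (j, k), (i, k'), (j, k')} := by
    ext p
    simp only [Finset.mem_filter, Finset.mem_univ, true_and, Finset.mem_insert,
      Finset.mem_singleton]
    constructor
    · intro hp
      by_contra hc
      push_neg at hc
      refine hp (hoff p.1 p.2 ?_)
      have hp1 : p = (p.1, p.2) := rfl
      rintro ⟨h1 | h1, h2 | h2⟩ <;> rw [h1, h2] at hp1 <;> tauto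
    · rintro (rfl | rfl | rfl | rfl) <;> simp [hk.2.1, hk.2.2.1, hk'.2.1, hk'.2.2.1,
        v1, v2, v3, v4]
  refine ⟨?_, ?_, ?_⟩
  · rw [hDset]
    rw [Finset.card_insert_of_notMem (by simp [hij, hkk]),
      Finset.card_insert_of_notMem (by simp [hij, hkk]),
      Finset.card_insert_of_notMem (by simp [hij, hkk]), Finset.card_singleton]
  · intro p hp
    rw [hDset] at hp
    simp only [Finset.mem_insert, Finset.mem_singleton] at hp
    rcases hp with rfl | rfl | rfl | rfl <;> simp
  · intro p hp
    rw [hDset] at hp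
    simp only [Finset.mem_insert, Finset.mem_singleton] at hp
    have hFik : (i, k) ∉ F := not_mem_F_of_true hA hk.2.1
    have hFjk : (j, k) ∉ F := hk.2.2.2
    have hFik' : (i, k') ∉ F := not_mem_F_of_true hB hk'.2.1
    have hFjk' : (j, k') ∉ F := hk'.2.2.2
    rcases hp with rfl | rfl | rfl | rfl <;> exact ⟨by assumption, by assumption⟩

lemma uniq_downpair (hij : i ≠ j) (hAB : A ≠ B) {k2 k2' : Fin n}
    (hk : k ∈ Uset F i j A) (hk' : k' ∈ Uset F i j B)
    (heq : downM i j A k = downM i j B k')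
    (hk2 : k2 ∈ Uset F i j A) (hk2' : k2' ∈ Uset F i j B)
    (heq2 : downM i j A k2 = downM i j B k2') : k = k2 ∧ k' = k2' := by
  have hkk : k ≠ k' := by
    rintro rfl; exact hAB (eq_of_downM_eq_self hk hk' heq)
  have hkk2 : k2 ≠ k2' := by
    rintro rfl; exact hAB (eq_of_downM_eq_self hk2 hk2' heq2)
  obtain ⟨v1, v2, v3, v4, hoff⟩ := downpair_vals hij hkk hk hk' heq
  obtain ⟨w1, w2, w3, w4, hoff2⟩ := downpair_vals hij hkk2 hk2 hk2' heq2
  simp only [Uset, Finset.mem_filter] at hk hk' hk2 hk2'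
  have hk2eq : k = k2 := by
    by_contra hne
    -- A i k2 = true, B i k2 = false, so (i,k2) is a difference, hence k2 ∈ {k,k'}
    have hdiff : A i k2 ≠ B i k2 := by rw [hk2.2.1, w1]; simp
    have : k2 = k ∨ k2 = k' := by
      by_contra hc
      push_neg at hc
      exact hdiff (hoff i k2 (by tauto))
    rcases this with h | h
    · exact hne h.symm
    · rw [h] at hk2
      rw [hk2.2.1] at v3
      simp at v3
  subst hk2eq
  refine ⟨rfl, ?_⟩
  have heq3 : downM i j B k' = downM i j B k2' := heq.symm.trans heq2
  exact downM_col_inj hk'.2.1 hk2'.2.1 heq3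

end DownAdj

section Sizes

variable {m n : ℕ} {r : Fin m → ℕ} {c : Fin n → ℕ} {F : Finset (Fin m × Fin n)}
  {i j : Fin m} {A B : BinMat m n}

lemma sizes_of_adj (hij : i ≠ j) (hA : inOmega r c F A) (hB : inOmega r c F B)
    (hadj : switchAdjIJ F i j A B) :
    usize F i j B = usize F i j A ∧ lsize F i j B = lsize F i j A := by
  obtain ⟨k, k', hkk, q1, q2, q3, q4, q5, q6, q7, q8, hFjk, hFik', hoff⟩ :=
    struct_of_adj hij hA hB hadj
  have hkU : k ∈ Uset F i j A := by
    simp only [Uset, Finset.mem_filter]; exact ⟨Finset.mem_univ _, q1, q2, hFjk⟩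
  have hk'U : k' ∉ Uset F i j A := by
    simp only [Uset, Finset.mem_filter, q5]; tauto
  have hk'L : k' ∈ Lset F i j A := by
    simp only [Lset, Finset.mem_filter]; exact ⟨Finset.mem_univ _, q5, q6, hFik'⟩
  have hkL : k ∉ Lset F i j A := by
    simp only [Lset, Finset.mem_filter, q1]; tauto
  have hUeq : Uset F i j B = insert k' ((Uset F i j A).erase k) := by
    ext b
    simp only [Uset, Finset.mem_filter, Finset.mem_insert, Finset.mem_erase,
      Finset.mem_univ, true_and]
    by_cases hb : b = k'
    · subst hb
      simp only [q7, q8, true_and]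
      have : (j, b) ∉ F := not_mem_F_of_true hA q6
      tauto
    · by_cases hbk : b = k
      · subst hbk
        simp only [q3]
        have : ¬(false = true ∧ B j b = false ∧ (j, b) ∉ F) := by simp
        tauto
      · have h1 : A i b = B i b := hoff i b (by tauto)
        have h2 : A j b = B j b := hoff j b (by tauto)
        rw [← h1, ← h2]
        tauto
  have hLeq : Lset F i j B = insert k ((Lset F i j A).erase k') := by
    ext b
    simp only [Lset, Finset.mem_filter, Finset.mem_insert, Finset.mem_erase,
      Finset.mem_univ, true_and]
    by_cases hb : b = k
    · subst hb
      simp only [q3, q4, true_and]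
      have : (i, b) ∉ F := not_mem_F_of_true hA q1
      tauto
    · by_cases hbk : b = k'
      · subst hbk
        simp only [q7]
        have : ¬(true = false ∧ B j b = true ∧ (i, b) ∉ F) := by simp
        tauto
      · have h1 : A i b = B i b := hoff i b (by tauto)
        have h2 : A j b = B j b := hoff j b (by tauto)
        rw [← h1, ← h2]
        tauto
  constructor
  · rw [usize, usize, hUeq, Finset.card_insert_of_notMem (by simp [hk'U, hkk]),
      Finset.card_erase_of_mem hkU]
    have : 1 ≤ (Uset F i j A).card := Finset.card_pos.mpr ⟨k, hkU⟩
    omega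
  · rw [lsize, lsize, hLeq, Finset.card_insert_of_notMem (by simp [hkL]),
      Finset.card_erase_of_mem hk'L]
    have : 1 ≤ (Lset F i j A).card := Finset.card_pos.mpr ⟨k', hk'L⟩
    omega

lemma switchAdjIJ_comm : switchAdjIJ F i j A B ↔ switchAdjIJ F j i A B := by
  unfold switchAdjIJ
  constructor <;> rintro ⟨h1, h2, h3⟩ <;>
    exact ⟨h1, fun p hp => (h2 p hp).symm,
      fun p hp => ⟨(h3 p hp).2, (h3 p hp).1⟩⟩

lemma switchAdjIJ_symm : switchAdjIJ F i j A B ↔ switchAdjIJ F i j B A := by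
  have hset : ((univ : Finset (Fin m × Fin n)).filter fun p => B p.1 p.2 ≠ A p.1 p.2)
      = (univ : Finset (Fin m × Fin n)).filter fun p => A p.1 p.2 ≠ B p.1 p.2 := by
    ext p; simp [ne_comm]
  unfold switchAdjIJ
  rw [hset]

lemma Uset_swap : Uset F j i A = Lset F i j A := by
  ext b; simp only [Uset, Lset, Finset.mem_filter]; tauto

lemma usize_add_lsize_le (A : BinMat m n) : usize F i j A + lsize F i j A ≤ n := by
  have hdisj : Disjoint (Uset F i j A) (Lset F i j A) := by
    rw [Finset.disjoint_left]
    intro a ha hb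
    simp only [Uset, Lset, Finset.mem_filter] at ha hb
    rw [ha.2.1] at hb
    simp at hb
  calc usize F i j A + lsize F i j A = ((Uset F i j A) ∪ (Lset F i j A)).card :=
        (Finset.card_union_of_disjoint hdisj).symm
    _ ≤ (univ : Finset (Fin n)).card := Finset.card_le_card (Finset.subset_univ _)
    _ = n := Finset.card_univ.trans (Fintype.card_fin n)

end Sizes

lemma arith_key (u l nn : ℕ) (hn : 3 ≤ nn) (hsum : u + l ≤ nn) (hul : u ≤ l) :
    2 * (u * l + u) ≤ nn * (nn - 1) := by
  obtain ⟨N, rfl⟩ : ∃ N, nn = N + 1 := ⟨nn - 1, by omega⟩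
  simp only [Nat.add_sub_cancel]
  rcases Nat.lt_or_ge u 2 with hu | hu
  · interval_cases u <;> nlinarith
  · nlinarith [Nat.mul_le_mul_left u hsum, sq_nonneg (N + 1 - 2 * u)]

section Gram

variable {m n : ℕ} (r : Fin m → ℕ) (c : Fin n → ℕ) (F : Finset (Fin m × Fin n))
  (i j : Fin m)

/-- Off-diagonal adjacent pairs for rows `i,j`. -/
noncomputable def adjOff : Finset (OmegaType r c F × OmegaType r c F) :=
  univ.filter fun w => w.1 ≠ w.2 ∧ switchAdjIJ F i j w.1.1 w.2.1

lemma gram (hn : 3 ≤ n) (hij : i ≠ j) (x : OmegaType r c F → ℝ) :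
    -(∑ A : OmegaType r c F, (usize F i j A.1 : ℝ) * x A ^ 2)
      ≤ ∑ w ∈ adjOff r c F i j, x w.1 * x w.2 := by
  classical
  set T : Finset (OmegaType r c F × Fin n) :=
    univ.filter (fun q => q.2 ∈ Uset F i j q.1.1) with hT
  set φ : OmegaType r c F × Fin n → BinMat m n := fun q => downM i j q.1.1 q.2 with hφ
  have h0 : (0:ℝ) ≤ ∑ D : BinMat m n, (∑ q ∈ T.filter (fun q => φ q = D), x q.1)^2 :=
    Finset.sum_nonneg fun _ _ => sq_nonneg _
  have hsq : ∀ D : BinMat m n, (∑ q ∈ T.filter (fun q => φ q = D), x q.1)^2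
      = ∑ q ∈ T.filter (fun q => φ q = D),
          x q.1 * (∑ q' ∈ T.filter (fun q' => φ q' = φ q), x q'.1) := by
    intro D
    rw [pow_two, Finset.sum_mul]
    refine Finset.sum_congr rfl fun q hq => ?_
    have hq2 : φ q = D := (Finset.mem_filter.mp hq).2
    rw [hq2]
  have hfib : ∑ D : BinMat m n, (∑ q ∈ T.filter (fun q => φ q = D), x q.1)^2
      = ∑ q ∈ T, x q.1 * (∑ q' ∈ T.filter (fun q' => φ q' = φ q), x q'.1) := by
    calc ∑ D : BinMat m n, (∑ q ∈ T.filter (fun q => φ q = D), x q.1)^2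
        = ∑ D : BinMat m n, ∑ q ∈ T.filter (fun q => φ q = D),
            x q.1 * (∑ q' ∈ T.filter (fun q' => φ q' = φ q), x q'.1) :=
          Finset.sum_congr rfl fun D _ => hsq D
      _ = _ := Finset.sum_fiberwise T φ _
  have hsplit : ∑ q ∈ T, x q.1 * (∑ q' ∈ T.filter (fun q' => φ q' = φ q), x q'.1)
      = (∑ q ∈ T, x q.1 * x q.1)
        + ∑ q ∈ T, ∑ q' ∈ (T.filter (fun q' => φ q' = φ q)).erase q, x q.1 * x q'.1 := by
    rw [← Finset.sum_add_distrib]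
    refine Finset.sum_congr rfl fun q hq => ?_
    have hqmem : q ∈ T.filter (fun q' => φ q' = φ q) := Finset.mem_filter.mpr ⟨hq, rfl⟩
    rw [Finset.mul_sum, ← Finset.add_sum_erase _ _ hqmem]
  have hdiag : ∑ q ∈ T, x q.1 * x q.1
      = ∑ A : OmegaType r c F, (usize F i j A.1 : ℝ) * x A ^ 2 := by
    rw [hT, Finset.sum_filter, Fintype.sum_prod_type]
    refine Finset.sum_congr rfl fun A _ => ?_
    have hrfl : (∑ y : Fin n, if (A, y).2 ∈ Uset F i j (A, y).1.1 then x (A, y).1 * x (A, y).1 else 0)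
        = ∑ y : Fin n, (if y ∈ Uset F i j A.1 then x A * x A else 0) := rfl
    rw [hrfl, Finset.sum_ite_mem, Finset.univ_inter, Finset.sum_const, nsmul_eq_mul]
    unfold usize
    rw [pow_two]
  -- the cross term equals the sum over adjacent pairs
  have hmemsig : ∀ z : Σ _ : OmegaType r c F × Fin n, OmegaType r c F × Fin n,
      z ∈ (T.sigma fun q => (T.filter (fun q' => φ q' = φ q)).erase q) →
        z.1.2 ∈ Uset F i j z.1.1.1 ∧ z.2.2 ∈ Uset F i j z.2.1.1 ∧
          downM i j z.1.1.1 z.1.2 = downM i j z.2.1.1 z.2.2 ∧ z.2 ≠ z.1 := by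
    intro z hz
    simp only [Finset.mem_sigma, Finset.mem_erase, Finset.mem_filter, hT,
      Finset.mem_univ, true_and] at hz
    exact ⟨hz.1, hz.2.2.1, hz.2.2.2.symm, hz.2.1⟩
  have hABne : ∀ z : Σ _ : OmegaType r c F × Fin n, OmegaType r c F × Fin n,
      z ∈ (T.sigma fun q => (T.filter (fun q' => φ q' = φ q)).erase q) →
        z.1.1 ≠ z.2.1 := by
    intro z hz hAB
    obtain ⟨h1, h2, h3, h4⟩ := hmemsig z hz
    rw [← hAB] at h2 h3
    have hU1 : z.1.1.1 i z.1.2 = true := by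
      have := h1; simp only [Uset, Finset.mem_filter] at this; exact this.2.1
    have hU2 : z.1.1.1 i z.2.2 = true := by
      have := h2; simp only [Uset, Finset.mem_filter] at this; exact this.2.1
    have hcols : z.1.2 = z.2.2 := downM_col_inj hU1 hU2 h3
    exact h4 (Prod.ext hAB.symm hcols.symm)
  have hcross : ∑ q ∈ T, ∑ q' ∈ (T.filter (fun q' => φ q' = φ q)).erase q, x q.1 * x q'.1
      = ∑ w ∈ adjOff r c F i j, x w.1 * x w.2 := by
    rw [Finset.sum_sigma']
    have hnpos : 0 < n := by omega
    refine Finset.sum_nbij' (i := fun z => (z.1.1, z.2.1))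
      (j := fun w =>
        if h : ∃ kk : Fin n × Fin n, kk.1 ∈ Uset F i j w.1.1 ∧ kk.2 ∈ Uset F i j w.2.1 ∧
            downM i j w.1.1 kk.1 = downM i j w.2.1 kk.2 then
          ⟨(w.1, h.choose.1), (w.2, h.choose.2)⟩
        else ⟨(w.1, ⟨0, hnpos⟩), (w.1, ⟨0, hnpos⟩)⟩)
      ?_ ?_ ?_ ?_ ?_
    · -- maps into adjOff
      intro z hz
      obtain ⟨h1, h2, h3, h4⟩ := hmemsig z hz
      have hne := hABne z hz
      rw [adjOff, Finset.mem_filter]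
      refine ⟨Finset.mem_univ _, hne, ?_⟩
      exact adj_of_downpair hij z.1.1.2 z.2.1.2 (fun hc => hne (Subtype.ext hc)) h1 h2 h3
    · -- maps back into the sigma set
      intro w hw
      rw [adjOff, Finset.mem_filter] at hw
      obtain ⟨-, hne, hadj⟩ := hw
      obtain ⟨k, k', hk, hk', heq⟩ := exists_downpair hij w.1.2 w.2.2 hadj
      have hP : ∃ kk : Fin n × Fin n, kk.1 ∈ Uset F i j w.1.1 ∧ kk.2 ∈ Uset F i j w.2.1 ∧
          downM i j w.1.1 kk.1 = downM i j w.2.1 kk.2 := ⟨(k, k'), hk, hk', heq⟩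
      beta_reduce
      rw [dif_pos hP]
      obtain ⟨hc1, hc2, hc3⟩ := hP.choose_spec
      simp only [Finset.mem_sigma, Finset.mem_erase, Finset.mem_filter, hT,
        Finset.mem_univ, true_and]
      exact ⟨hc1, fun hcontra => hne (congrArg Prod.fst hcontra).symm, hc2, hc3.symm⟩
    · -- left inverse
      intro z hz
      obtain ⟨h1, h2, h3, h4⟩ := hmemsig z hz
      have hne := hABne z hz
      have hP : ∃ kk : Fin n × Fin n, kk.1 ∈ Uset F i j z.1.1.1 ∧
          kk.2 ∈ Uset F i j z.2.1.1 ∧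
          downM i j z.1.1.1 kk.1 = downM i j z.2.1.1 kk.2 := ⟨(z.1.2, z.2.2), h1, h2, h3⟩
      beta_reduce
      rw [dif_pos hP]
      obtain ⟨hc1, hc2, hc3⟩ := hP.choose_spec
      have huniq := uniq_downpair hij (fun hc : z.1.1.1 = z.2.1.1 => hne (Subtype.ext hc))
        h1 h2 h3 hc1 hc2 hc3
      obtain ⟨⟨A, k⟩, B, k'⟩ := z
      simp only at huniq ⊢
      rw [← huniq.1, ← huniq.2]
    · -- right inverse
      intro w hw
      rw [adjOff, Finset.mem_filter] at hw
      obtain ⟨-, hne, hadj⟩ := hw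
      obtain ⟨k, k', hk, hk', heq⟩ := exists_downpair hij w.1.2 w.2.2 hadj
      have hP : ∃ kk : Fin n × Fin n, kk.1 ∈ Uset F i j w.1.1 ∧ kk.2 ∈ Uset F i j w.2.1 ∧
          downM i j w.1.1 kk.1 = downM i j w.2.1 kk.2 := ⟨(k, k'), hk, hk', heq⟩
      beta_reduce
      rw [dif_pos hP]
    · intro z _
      rfl
  have hfinal : ∑ D : BinMat m n, (∑ q ∈ T.filter (fun q => φ q = D), x q.1)^2
      = (∑ A : OmegaType r c F, (usize F i j A.1 : ℝ) * x A ^ 2)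
        + ∑ w ∈ adjOff r c F i j, x w.1 * x w.2 := by
    rw [hfib, hsplit, hdiag, hcross]
  linarith [h0, hfinal]

end Gram

section Assembly

variable {m n : ℕ} (r : Fin m → ℕ) (c : Fin n → ℕ) (F : Finset (Fin m × Fin n))
  (i j : Fin m)

lemma adjOff_comm : adjOff r c F j i = adjOff r c F i j := by
  unfold adjOff
  apply Finset.filter_congr
  intro w _
  rw [switchAdjIJ_comm (i := j) (j := i)]

lemma gramL (hn : 3 ≤ n) (hij : i ≠ j) (x : OmegaType r c F → ℝ) :
    -(∑ A : OmegaType r c F, (lsize F i j A.1 : ℝ) * x A ^ 2)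
      ≤ ∑ w ∈ adjOff r c F i j, x w.1 * x w.2 := by
  have h := gram r c F j i hn hij.symm x
  rw [adjOff_comm] at h
  have heq : ∀ A : OmegaType r c F, usize F j i A.1 = lsize F i j A.1 := by
    intro A; unfold usize lsize; rw [Uset_swap]
  calc -(∑ A : OmegaType r c F, (lsize F i j A.1 : ℝ) * x A ^ 2)
      = -(∑ A : OmegaType r c F, (usize F j i A.1 : ℝ) * x A ^ 2) := by
        congr 1; exact Finset.sum_congr rfl fun A _ => by rw [heq]
    _ ≤ _ := h

lemma rowpair_unique {A B : OmegaType r c F} (hAB : A ≠ B) {p q : Fin m × Fin m}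
    (hp : p ∈ rowPairs m) (hq : q ∈ rowPairs m)
    (hadjp : switchAdjIJ F p.1 p.2 A.1 B.1) (hadjq : switchAdjIJ F q.1 q.2 A.1 B.1) :
    p = q := by
  rw [rowPairs, Finset.mem_filter] at hp hq
  have hpij : p.1 ≠ p.2 := ne_of_lt hp.2
  obtain ⟨k, k', hkk, q1, q2, q3, q4, -, -, -, -, -, -, -⟩ :=
    struct_of_adj hpij A.2 B.2 hadjp
  have hd1 : (p.1, k) ∈ (univ : Finset (Fin m × Fin n)).filter
      fun pp => A.1 pp.1 pp.2 ≠ B.1 pp.1 pp.2 := by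
    simp only [Finset.mem_filter, Finset.mem_univ, true_and]
    rw [q1, q3]; simp
  have hd2 : (p.2, k) ∈ (univ : Finset (Fin m × Fin n)).filter
      fun pp => A.1 pp.1 pp.2 ≠ B.1 pp.1 pp.2 := by
    simp only [Finset.mem_filter, Finset.mem_univ, true_and]
    rw [q2, q4]; simp
  have hr1 := hadjq.2.1 _ hd1
  have hr2 := hadjq.2.1 _ hd2
  simp only at hr1 hr2
  -- p.1, p.2 ∈ {q.1, q.2}, with p.1 < p.2 and q.1 < q.2
  have hlt1 : (p.1 : ℕ) < (p.2 : ℕ) := hp.2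
  have hlt2 : (q.1 : ℕ) < (q.2 : ℕ) := hq.2
  have e1 : p.1 = q.1 ∨ p.1 = q.2 := hr1
  have e2 : p.2 = q.1 ∨ p.2 = q.2 := hr2
  have : (p.1 : ℕ) = (q.1 : ℕ) ∧ (p.2 : ℕ) = (q.2 : ℕ) := by
    rcases e1 with h | h <;> rcases e2 with h' | h' <;>
      (have hv := congrArg Fin.val h; have hv' := congrArg Fin.val h'; omega)
  exact Prod.ext (Fin.ext this.1) (Fin.ext this.2)

end Assembly

section PairForm

variable {m n : ℕ} (r : Fin m → ℕ) (c : Fin n → ℕ) (F : Finset (Fin m × Fin n))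
  (i j : Fin m)

lemma cast_nn_pos (hn : 3 ≤ n) : (0:ℝ) < (n : ℝ) * ((n : ℝ) - 1) := by
  have : (3:ℝ) ≤ (n:ℝ) := by exact_mod_cast hn
  nlinarith

lemma gamma_mul_le_one (hn : 3 ≤ n) {u l : ℕ} (hsum : u + l ≤ n) (hul : u ≤ l) :
    ((u : ℝ) * l + u) * (2 / ((n : ℝ) * ((n : ℝ) - 1))) ≤ 1 := by
  have hpos := cast_nn_pos (n := n) hn
  have hk := arith_key u l n hn hsum hul
  have hrw : ((u : ℝ) * l + u) * (2 / ((n : ℝ) * ((n : ℝ) - 1)))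
      = (2 * ((u:ℝ) * l + u)) / ((n : ℝ) * ((n : ℝ) - 1)) := by ring
  rw [hrw, div_le_one hpos]
  have hcast : ((n * (n - 1) : ℕ) : ℝ) = (n : ℝ) * ((n : ℝ) - 1) := by
    push_cast [Nat.cast_sub (show 1 ≤ n by omega)]
    ring
  rw [← hcast]
  have : ((2 * (u * l + u) : ℕ) : ℝ) ≤ ((n * (n - 1) : ℕ) : ℝ) := by exact_mod_cast hk
  calc 2 * ((u:ℝ) * l + u) = ((2 * (u * l + u) : ℕ) : ℝ) := by push_cast; ring
    _ ≤ _ := this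

/-- The quadratic form of a single row pair is non-negative. -/
lemma pairform_nonneg (hn : 3 ≤ n) (hij : i ≠ j) (x : OmegaType r c F → ℝ) :
    0 ≤ (∑ A : OmegaType r c F,
          (1 - (usize F i j A.1 : ℝ) * (lsize F i j A.1 : ℝ)
            * (2 / ((n : ℝ) * ((n : ℝ) - 1)))) * x A ^ 2)
        + (2 / ((n : ℝ) * ((n : ℝ) - 1))) * ∑ w ∈ adjOff r c F i j, x w.1 * x w.2 := by
  classical
  set γ : ℝ := 2 / ((n : ℝ) * ((n : ℝ) - 1)) with hγdef
  have hγ : 0 ≤ γ := by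
    have := cast_nn_pos (n := n) hn
    positivity
  set yp : OmegaType r c F → ℝ :=
    fun A => if usize F i j A.1 ≤ lsize F i j A.1 then x A else 0 with hyp
  set ym : OmegaType r c F → ℝ :=
    fun A => if usize F i j A.1 ≤ lsize F i j A.1 then 0 else x A with hym
  have hxy : ∀ A, x A = yp A + ym A := by
    intro A
    rw [hyp, hym]
    by_cases h : usize F i j A.1 ≤ lsize F i j A.1 <;> simp [h]
  have hsame : ∀ w ∈ adjOff r c F i j,
      (usize F i j w.1.1 ≤ lsize F i j w.1.1 ↔ usize F i j w.2.1 ≤ lsize F i j w.2.1) := by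
    intro w hw
    rw [adjOff, Finset.mem_filter] at hw
    have hs := sizes_of_adj hij w.1.2 w.2.2 hw.2.2
    rw [hs.1, hs.2]
  have hadjsplit : ∑ w ∈ adjOff r c F i j, x w.1 * x w.2
      = (∑ w ∈ adjOff r c F i j, yp w.1 * yp w.2)
        + ∑ w ∈ adjOff r c F i j, ym w.1 * ym w.2 := by
    rw [← Finset.sum_add_distrib]
    refine Finset.sum_congr rfl fun w hw => ?_
    have hiff := hsame w hw
    rw [hxy w.1, hxy w.2, hyp, hym]
    by_cases h : usize F i j w.1.1 ≤ lsize F i j w.1.1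
    · have h2 : usize F i j w.2.1 ≤ lsize F i j w.2.1 := hiff.mp h
      simp [h, h2]
    · have h2 : ¬ usize F i j w.2.1 ≤ lsize F i j w.2.1 := fun hc => h (hiff.mpr hc)
      simp [h, h2]
  have hg1 := gram r c F i j hn hij yp
  have hg2 := gramL r c F i j hn hij ym
  have hkey : ∑ A : OmegaType r c F,
      ((1 - (usize F i j A.1 : ℝ) * (lsize F i j A.1 : ℝ) * γ) * x A ^ 2
        - γ * ((usize F i j A.1 : ℝ) * yp A ^ 2)
        - γ * ((lsize F i j A.1 : ℝ) * ym A ^ 2)) ≥ 0 := by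
    refine Finset.sum_nonneg fun A _ => ?_
    have hsumn := usize_add_lsize_le (F := F) (i := i) (j := j) (n := n) A.1
    by_cases h : usize F i j A.1 ≤ lsize F i j A.1
    · have hyA : yp A = x A := by rw [hyp]; simp [h]
      have hmA : ym A = 0 := by rw [hym]; simp [h]
      rw [hyA, hmA]
      have hle := gamma_mul_le_one (n := n) hn hsumn h
      have : (1 - (usize F i j A.1 : ℝ) * (lsize F i j A.1 : ℝ) * γ
          - γ * (usize F i j A.1 : ℝ)) ≥ 0 := by
        rw [hγdef]
        nlinarith [hle]
      nlinarith [sq_nonneg (x A), this]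
    · push_neg at h
      have hyA : yp A = 0 := by rw [hyp]; simp [not_le.mpr h]
      have hmA : ym A = x A := by rw [hym]; simp [not_le.mpr h]
      rw [hyA, hmA]
      have hle := gamma_mul_le_one (n := n) hn (by omega : lsize F i j A.1 + usize F i j A.1 ≤ n)
        (le_of_lt h)
      have : (1 - (usize F i j A.1 : ℝ) * (lsize F i j A.1 : ℝ) * γ
          - γ * (lsize F i j A.1 : ℝ)) ≥ 0 := by
        rw [hγdef]
        nlinarith [hle]
      nlinarith [sq_nonneg (x A), this]
  rw [hadjsplit]
  have e1 : ∑ A : OmegaType r c F,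
      ((1 - (usize F i j A.1 : ℝ) * (lsize F i j A.1 : ℝ) * γ) * x A ^ 2
        - γ * ((usize F i j A.1 : ℝ) * yp A ^ 2)
        - γ * ((lsize F i j A.1 : ℝ) * ym A ^ 2))
      = (∑ A : OmegaType r c F,
          (1 - (usize F i j A.1 : ℝ) * (lsize F i j A.1 : ℝ) * γ) * x A ^ 2)
        - γ * (∑ A : OmegaType r c F, (usize F i j A.1 : ℝ) * yp A ^ 2)
        - γ * (∑ A : OmegaType r c F, (lsize F i j A.1 : ℝ) * ym A ^ 2) := by
    rw [Finset.mul_sum, Finset.mul_sum, ← Finset.sum_sub_distrib, ← Finset.sum_sub_distrib]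
  rw [e1] at hkey
  have h2 : γ * (-(∑ A : OmegaType r c F, (usize F i j A.1 : ℝ) * yp A ^ 2))
      ≤ γ * ∑ w ∈ adjOff r c F i j, yp w.1 * yp w.2 :=
    mul_le_mul_of_nonneg_left hg1 hγ
  have h3 : γ * (-(∑ A : OmegaType r c F, (lsize F i j A.1 : ℝ) * ym A ^ 2))
      ≤ γ * ∑ w ∈ adjOff r c F i j, ym w.1 * ym w.2 :=
    mul_le_mul_of_nonneg_left hg2 hγ
  nlinarith [hkey, h2, h3]

end PairForm

section Final

variable {m n : ℕ} (r : Fin m → ℕ) (c : Fin n → ℕ) (F : Finset (Fin m × Fin n))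

/-- Single-pair contribution to the transition matrix. -/
noncomputable def ent (p : Fin m × Fin m) (A B : OmegaType r c F) : ℝ :=
  if A = B then
    1 - (usize F p.1 p.2 A.val : ℝ) * (lsize F p.1 p.2 A.val : ℝ) *
      (2 / ((n : ℝ) * ((n : ℝ) - 1)))
  else if switchAdjIJ F p.1 p.2 A.val B.val then 2 / ((n : ℝ) * ((n : ℝ) - 1))
  else 0

lemma entry_eq (A B : OmegaType r c F) :
    PKTV r c F A B = (m.choose 2 : ℝ)⁻¹ * ∑ p ∈ rowPairs m, ent r c F p A B := by
  classical
  by_cases h : A = B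
  · subst h
    simp [PKTV, ent]
  · simp only [PKTV, Matrix.of_apply, if_neg h, ent]
    by_cases h2 : ∃ p ∈ rowPairs m, switchAdjIJ F p.1 p.2 A.val B.val
    · rw [if_pos h2]
      obtain ⟨p0, hp0, hadj0⟩ := h2
      congr 1
      rw [Finset.sum_eq_single_of_mem p0 hp0]
      · rw [if_pos hadj0]
      · intro q hq hqne
        rw [if_neg]
        intro hadjq
        exact hqne (rowpair_unique r c F h hq hp0 hadjq hadj0)
    · rw [if_neg h2]
      symm
      rw [mul_eq_zero]
      right
      refine Finset.sum_eq_zero fun p hp => ?_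
      rw [if_neg]
      intro hadj
      exact h2 ⟨p, hp, hadj⟩

lemma pairsum_eq (p : Fin m × Fin m) (x : OmegaType r c F → ℝ) :
    ∑ A : OmegaType r c F, ∑ B : OmegaType r c F, x A * ent r c F p A B * x B
      = (∑ A : OmegaType r c F,
          (1 - (usize F p.1 p.2 A.1 : ℝ) * (lsize F p.1 p.2 A.1 : ℝ)
            * (2 / ((n : ℝ) * ((n : ℝ) - 1)))) * x A ^ 2)
        + (2 / ((n : ℝ) * ((n : ℝ) - 1)))
          * ∑ w ∈ adjOff r c F p.1 p.2, x w.1 * x w.2 := by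
  classical
  have hterm : ∀ A B : OmegaType r c F, x A * ent r c F p A B * x B
      = (if A = B then
          (1 - (usize F p.1 p.2 A.1 : ℝ) * (lsize F p.1 p.2 A.1 : ℝ)
            * (2 / ((n : ℝ) * ((n : ℝ) - 1)))) * x A ^ 2 else 0)
        + (2 / ((n : ℝ) * ((n : ℝ) - 1)))
          * (if A ≠ B ∧ switchAdjIJ F p.1 p.2 A.1 B.1 then x A * x B else 0) := by
    intro A B
    by_cases h : A = B
    · subst h
      rw [ent, if_pos rfl, if_pos rfl, if_neg (by simp)]
      ring
    · rw [ent, if_neg h, if_neg h]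
      by_cases hadj : switchAdjIJ F p.1 p.2 A.1 B.1
      · rw [if_pos hadj, if_pos ⟨h, hadj⟩]
        ring
      · rw [if_neg hadj, if_neg (by tauto)]
        ring
  have hadjsum : ∑ w ∈ adjOff r c F p.1 p.2, x w.1 * x w.2
      = ∑ A : OmegaType r c F, ∑ B : OmegaType r c F,
          (if A ≠ B ∧ switchAdjIJ F p.1 p.2 A.1 B.1 then x A * x B else 0) := by
    rw [adjOff, Finset.sum_filter, Fintype.sum_prod_type]
  calc ∑ A : OmegaType r c F, ∑ B : OmegaType r c F, x A * ent r c F p A B * x B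
      = ∑ A : OmegaType r c F, ∑ B : OmegaType r c F,
          ((if A = B then
            (1 - (usize F p.1 p.2 A.1 : ℝ) * (lsize F p.1 p.2 A.1 : ℝ)
              * (2 / ((n : ℝ) * ((n : ℝ) - 1)))) * x A ^ 2 else 0)
          + (2 / ((n : ℝ) * ((n : ℝ) - 1)))
            * (if A ≠ B ∧ switchAdjIJ F p.1 p.2 A.1 B.1 then x A * x B else 0)) :=
        Finset.sum_congr rfl fun A _ => Finset.sum_congr rfl fun B _ => hterm A B
    _ = (∑ A : OmegaType r c F, ∑ B : OmegaType r c F,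
          (if A = B then
            (1 - (usize F p.1 p.2 A.1 : ℝ) * (lsize F p.1 p.2 A.1 : ℝ)
              * (2 / ((n : ℝ) * ((n : ℝ) - 1)))) * x A ^ 2 else 0))
        + ∑ A : OmegaType r c F, ∑ B : OmegaType r c F,
            (2 / ((n : ℝ) * ((n : ℝ) - 1)))
              * (if A ≠ B ∧ switchAdjIJ F p.1 p.2 A.1 B.1 then x A * x B else 0) := by
        rw [← Finset.sum_add_distrib]
        exact Finset.sum_congr rfl fun A _ => by rw [← Finset.sum_add_distrib]
    _ = _ := by
        congr 1
        · refine Finset.sum_congr rfl fun A _ => ?_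
          simp
        · simp_rw [← Finset.mul_sum]
          rw [hadjsum]

lemma PKTV_symm (A B : OmegaType r c F) : PKTV r c F A B = PKTV r c F B A := by
  classical
  by_cases h : A = B
  · subst h; rfl
  · simp only [PKTV, Matrix.of_apply, if_neg h, if_neg (Ne.symm h)]
    by_cases h2 : ∃ p ∈ rowPairs m, switchAdjIJ F p.1 p.2 A.val B.val
    · rw [if_pos h2, if_pos ?_]
      obtain ⟨p, hp, hadj⟩ := h2
      exact ⟨p, hp, switchAdjIJ_symm.mp hadj⟩
    · rw [if_neg h2, if_neg ?_]
      rintro ⟨p, hp, hadj⟩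
      exact h2 ⟨p, hp, switchAdjIJ_symm.mp hadj⟩

end Final

/-- for `n ≥ 3`, the transition matrix of the KTV-switch chain on
`Ω(r,c,F)` is positive semidefinite, i.e. all of its eigenvalues are non-negative
(so the chain need not be made lazy). -/
theorem stmt_10 {m n : ℕ} (hn : 3 ≤ n) (r : Fin m → ℕ) (c : Fin n → ℕ)
    (F : Finset (Fin m × Fin n)) :
    (PKTV r c F).PosSemidef := by
  classical
  rw [Matrix.posSemidef_iff_dotProduct_mulVec]
  constructor
  · ext A B
    simp only [Matrix.conjTranspose_apply, star_trivial]
    exact PKTV_symm r c F B A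
  · intro x
    simp only [star_trivial, dotProduct, Matrix.mulVec, dotProduct]
    have hform : ∑ A : OmegaType r c F, x A * ∑ B : OmegaType r c F, PKTV r c F A B * x B
        = (m.choose 2 : ℝ)⁻¹ * ∑ p ∈ rowPairs m,
            ∑ A : OmegaType r c F, ∑ B : OmegaType r c F, x A * ent r c F p A B * x B := by
      calc ∑ A : OmegaType r c F, x A * ∑ B : OmegaType r c F, PKTV r c F A B * x B
          = ∑ A : OmegaType r c F, ∑ B : OmegaType r c F,
              (m.choose 2 : ℝ)⁻¹ * ∑ p ∈ rowPairs m, x A * ent r c F p A B * x B := by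
            refine Finset.sum_congr rfl fun A _ => ?_
            rw [Finset.mul_sum]
            refine Finset.sum_congr rfl fun B _ => ?_
            rw [entry_eq r c F A B, Finset.mul_sum, Finset.sum_mul, Finset.mul_sum,
              Finset.mul_sum]
            exact Finset.sum_congr rfl fun p _ => by ring
        _ = (m.choose 2 : ℝ)⁻¹ * ∑ A : OmegaType r c F, ∑ B : OmegaType r c F,
              ∑ p ∈ rowPairs m, x A * ent r c F p A B * x B := by
            simp_rw [← Finset.mul_sum]
        _ = _ := by
            congr 1
            calc ∑ A : OmegaType r c F, ∑ B : OmegaType r c F,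
                  ∑ p ∈ rowPairs m, x A * ent r c F p A B * x B
                = ∑ A : OmegaType r c F, ∑ p ∈ rowPairs m,
                    ∑ B : OmegaType r c F, x A * ent r c F p A B * x B :=
                  Finset.sum_congr rfl fun A _ => Finset.sum_comm
              _ = _ := Finset.sum_comm
    rw [hform]
    refine mul_nonneg (by positivity) (Finset.sum_nonneg fun p hp => ?_)
    have hij : p.1 ≠ p.2 := by
      rw [rowPairs, Finset.mem_filter] at hp
      exact ne_of_lt hp.2
    rw [pairsum_eq]
    exact pairform_nonneg r c F p.1 p.2 hn hij x
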